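/- For the annuli B_k = {z : 10a_k < |z| < ((2k+3)/(2k+4))a_{k+1}} and f as above, for C sufficiently large one has f(B_k) ⊂ B_{k+1} for all k ≥ 1; consequently every point of B_1 lies in the escaping set of f (its orbit tends to ∞). -/

import Mathlib

open Finset Filter

private lemma aux_prod_one_sub (s : Finset ℕ) (x : ℕ → ℝ) (h0 : ∀ i ∈ s, 0 ≤ x i)
    (h1 : ∀ i ∈ s, x i ≤ 1) : 1 - ∑ i ∈ s, x i ≤ ∏ i ∈ s, (1 - x i) := by
  classical
  induction s using Finset.cons_induction with
  | empty => simp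
  | cons i s his ih =>
    rw [Finset.prod_cons, Finset.sum_cons]
    have hxi0 : 0 ≤ x i := h0 i (Finset.mem_cons_self i s)
    have hxi1 : x i ≤ 1 := h1 i (Finset.mem_cons_self i s)
    have ih' := ih (fun j hj => h0 j (Finset.mem_cons_of_mem hj))
      (fun j hj => h1 j (Finset.mem_cons_of_mem hj))
    have hs0 : 0 ≤ ∑ j ∈ s, x j := Finset.sum_nonneg fun j hj => h0 j (Finset.mem_cons_of_mem hj)
    nlinarith [mul_le_mul_of_nonneg_left ih' (by linarith : (0:ℝ) ≤ 1 - x i)]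

private lemma aux_prod_le_exp (s : Finset ℕ) (x : ℕ → ℝ) (h0 : ∀ i ∈ s, 0 ≤ x i) :
    ∏ i ∈ s, (1 + x i) ≤ Real.exp (∑ i ∈ s, x i) := by
  rw [Real.exp_sum]
  refine Finset.prod_le_prod (fun i hi => by nlinarith [h0 i hi]) (fun i hi => ?_)
  have := Real.add_one_le_exp (x i)
  linarith

private lemma aux_exp_le_inv {x : ℝ} (h0 : 0 ≤ x) (h1 : x < 1) : Real.exp x ≤ (1 - x)⁻¹ := by
  have h2 : 1 - x ≤ Real.exp (-x) := by have := Real.add_one_le_exp (-x); linarith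
  have h3 : 0 < 1 - x := by linarith
  rw [Real.exp_neg] at h2
  rwa [le_inv_comm₀ h3 (Real.exp_pos x)] at h2

private lemma aux20 (k : ℕ) (hk : 1 ≤ k) : 90 * (k:ℝ) + 180 ≤ 20 ^ (k+1) := by
  induction k, hk using Nat.le_induction with
  | base => norm_num
  | succ n hn ih =>
    push_cast at ih ⊢
    have h2 : (20:ℝ)^(n+1+1) = 20*20^(n+1) := by ring
    have hn' : (1:ℝ) ≤ (n:ℝ) := by exact_mod_cast hn
    nlinarith

private lemma aux400 (k : ℕ) (hk : 1 ≤ k) : 180 * (k:ℝ) + 360 ≤ 400 ^ (k+1) := by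
  induction k, hk using Nat.le_induction with
  | base => norm_num
  | succ n hn ih =>
    push_cast at ih ⊢
    have h2 : (400:ℝ)^(n+1+1) = 400*400^(n+1) := by ring
    have hn' : (1:ℝ) ≤ (n:ℝ) := by exact_mod_cast hn
    nlinarith

private lemma aux_Icc_prod (a : ℕ → ℝ) (k : ℕ) :
    ∏ j ∈ Icc 1 k, a j = ∏ i ∈ range k, a (i+1) := by
  induction k with
  | zero => simp
  | succ n ih => rw [Finset.prod_Icc_succ_top (by omega), ih, Finset.prod_range_succ]

private lemma aux_Icc_sum (a : ℕ → ℝ) (k : ℕ) :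
    ∑ j ∈ Icc 1 k, a j = ∑ i ∈ range k, a (i+1) := by
  induction k with
  | zero => simp
  | succ n ih => rw [Finset.sum_Icc_succ_top (by omega), ih, Finset.sum_range_succ]

set_option maxHeartbeats 2000000 in
private lemma key_est (C : ℝ) (hC : 100 ≤ C) (a : ℕ → ℝ)
    (hpos : ∀ k : ℕ, 1 ≤ k → 0 < a k)
    (hmono : ∀ m n : ℕ, 1 ≤ m → m ≤ n → a m ≤ a n)
    (hgrow : ∀ k : ℕ, 1 ≤ k → 800 * a k ≤ a (k+1))
    (hsumA : ∀ k : ℕ, 1 ≤ k → ∑ j ∈ Icc 1 k, a j ≤ (800/799) * a k)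
    (hQid : ∀ k : ℕ, 1 ≤ k → a (k+1) * ∏ j ∈ Icc 1 k, a j = 8*C*(a k)^(k+1))
    (f : ℂ → ℂ) (hf : ∀ z, f z = C * z * ∏' i : ℕ, (1 - z / (a (i+1) : ℂ)))
    (k : ℕ) (hk : 1 ≤ k) (z : ℂ)
    (ht1 : 10 * a k < ‖z‖)
    (ht2 : ‖z‖ < (2*(k:ℝ)+3)/(2*(k:ℝ)+4) * a (k+1)) :
    10 * a (k+1) < ‖f z‖ ∧
      ‖f z‖ < (2*(k:ℝ)+5)/(2*(k:ℝ)+6) * a (k+2) := by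
  have hC0 : (0:ℝ) < C := by linarith
  set t := ‖z‖ with ht_def
  set K : ℝ := (k : ℝ) with hK_def
  have hK1 : (1:ℝ) ≤ K := by rw [hK_def]; exact_mod_cast hk
  have hak : 0 < a k := hpos k hk
  have hak1 : 0 < a (k+1) := hpos (k+1) (by omega)
  have hak2 : 0 < a (k+2) := hpos (k+2) (by omega)
  have ht0 : 0 < t := lt_trans (by positivity) ht1
  have hfrac1 : (2*K+3)/(2*K+4) < 1 := by
    rw [div_lt_one (by linarith)]; linarith
  have ht2' : t < a (k+1) := by
    have h1 : (2*K+3)/(2*K+4) * a (k+1) ≤ 1 * a (k+1) :=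
      mul_le_mul_of_nonneg_right hfrac1.le hak1.le
    rw [one_mul] at h1
    exact lt_of_lt_of_le ht2 h1
  -- the factors
  set g : ℕ → ℂ := fun i => 1 - z / (a (i+1) : ℂ) with hg_def
  have habs_div : ∀ i : ℕ, ‖z / (a (i+1) : ℂ)‖ = t / a (i+1) := by
    intro i
    rw [norm_div, Complex.norm_real, Real.norm_eq_abs, abs_of_pos (hpos (i+1) (by omega))]
  have habs_lb1 : ∀ i : ℕ, t / a (i+1) - 1 ≤ ‖g i‖ := by
    intro i
    have h1 := norm_sub_norm_le (z / (a (i+1):ℂ)) 1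
    rw [norm_sub_rev] at h1
    simp only [norm_one] at h1
    rw [habs_div i] at h1
    exact h1
  have habs_lb2 : ∀ i : ℕ, 1 - t / a (i+1) ≤ ‖g i‖ := by
    intro i
    have h1 := norm_sub_norm_le (1:ℂ) (z / (a (i+1):ℂ))
    simp only [norm_one] at h1
    rw [habs_div i] at h1
    exact h1
  have habs_ub : ∀ i : ℕ, ‖g i‖ ≤ 1 + t / a (i+1) := by
    intro i
    have h1 := norm_sub_le (1:ℂ) (z / (a (i+1):ℂ))
    simp only [norm_one] at h1
    rw [habs_div i] at h1
    exact h1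
  -- nonvanishing of factors
  have habs_div' : ∀ n : ℕ, 1 ≤ n → ‖z / (a n : ℂ)‖ = t / a n := by
    intro n hn
    rw [norm_div, Complex.norm_real, Real.norm_eq_abs, abs_of_pos (hpos n hn)]
  have gnz : ∀ i : ℕ, g i ≠ 0 := by
    intro i hzero
    have h1 : z / ((a (i+1):ℝ) : ℂ) = 1 := (sub_eq_zero.mp hzero).symm
    have h2 : t / a (i+1) = 1 := by rw [← habs_div i, h1, norm_one]
    have h4 : 0 < a (i+1) := hpos (i+1) (by omega)
    rw [div_eq_one_iff_eq (ne_of_gt h4)] at h2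
    rcases le_or_gt (i+1) k with hik | hik
    · have h3 : a (i+1) ≤ a k := hmono (i+1) k (by omega) hik
      linarith [hak]
    · have h3 : a (k+1) ≤ a (i+1) := hmono (k+1) (i+1) (by omega) (by omega)
      linarith [ht2']
  -- geometric decay of the tail
  have hpow800 : ∀ m : ℕ, 800^m * a (k+2) ≤ a (m + (k+2)) := by
    intro m
    induction m with
    | zero => simp
    | succ n ih =>
      have h1 := hgrow (n + (k+2)) (by omega)
      have h2 : (800:ℝ)^(n+1) * a (k+2) = 800 * (800^n * a (k+2)) := by ring
      have h3 : n + (k+2) + 1 = n + 1 + (k+2) := by omega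
      rw [h2, ← h3]
      linarith [mul_le_mul_of_nonneg_left ih (by norm_num : (0:ℝ) ≤ 800)]
  have h800t : t * 800 ≤ a (k+2) := by
    have h1 := hgrow (k+1) (by omega)
    linarith [ht2']
  have htail : ∀ m : ℕ, t / a (m + (k+2)) ≤ (1/800:ℝ)^m * (1/800) := by
    intro m
    have hden : 0 < a (m + (k+2)) := hpos _ (by omega)
    rw [div_le_iff₀ hden]
    have h1 : ((1/800:ℝ))^m * 800^m = 1 := by rw [← mul_pow]; norm_num
    have h2 : ((1/800:ℝ))^m * (1/800) * (800^m * a (k+2)) = a (k+2) / 800 := by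
      calc ((1/800:ℝ))^m * (1/800) * (800^m * a (k+2))
          = ((1/800:ℝ)^m * 800^m) * (a (k+2)/800) := by ring
        _ = a (k+2)/800 := by rw [h1, one_mul]
    calc t ≤ a (k+2) / 800 := by linarith
      _ = ((1/800:ℝ))^m * (1/800) * (800^m * a (k+2)) := h2.symm
      _ ≤ (1/800:ℝ)^m * (1/800) * a (m + (k+2)) := by
          apply mul_le_mul_of_nonneg_left (hpow800 m) (by positivity)
  -- bound on the logs of the tail factors
  have hlogb : ∀ m : ℕ, ‖Complex.log (g (m + (k+1)))‖ ≤ (3/2) * ((1/800:ℝ)^m * (1/800)) := by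
    intro m
    have hidx : m + (k+1) + 1 = m + (k+2) := by omega
    have heq : g (m + (k+1)) = 1 + -(z / ((a (m+(k+2)):ℝ) : ℂ)) := by
      show (1:ℂ) - z / ((a (m+(k+1)+1):ℝ):ℂ) = 1 + -(z / ((a (m+(k+2)):ℝ) : ℂ))
      rw [hidx, sub_eq_add_neg]
    have hnorm : ‖-(z / ((a (m+(k+2)):ℝ):ℂ))‖ = t / a (m+(k+2)) := by
      rw [norm_neg, habs_div' (m+(k+2)) (by omega)]
    have hsmall : ((1/800:ℝ))^m * (1/800) ≤ 1/2 := by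
      have : ((1/800:ℝ))^m ≤ 1 := pow_le_one₀ (by norm_num) (by norm_num)
      linarith
    have hhalf : ‖-(z / ((a (m+(k+2)):ℝ):ℂ))‖ ≤ 1/2 := by
      rw [hnorm]; exact le_trans (htail m) hsmall
    have hlog := Complex.norm_log_one_add_half_le_self hhalf
    rw [hnorm] at hlog
    rw [heq]
    refine le_trans hlog ?_
    linarith [htail m]
  have hgeo : Summable (fun m : ℕ => (3/2) * ((1/800:ℝ)^m * (1/800))) := by
    have h1 : Summable (fun m : ℕ => ((1/800:ℝ))^m) :=
      summable_geometric_of_lt_one (by norm_num) (by norm_num)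
    exact (h1.mul_right (1/800)).mul_left (3/2)
  have hsumlog_tail : Summable (fun m : ℕ => Complex.log (g (m + (k+1)))) :=
    Summable.of_norm (Summable.of_nonneg_of_le (fun m => norm_nonneg _) hlogb hgeo)
  have hsumlog : Summable (fun i : ℕ => Complex.log (g i)) :=
    (summable_nat_add_iff (k+1)).1 hsumlog_tail
  set S : ℂ := ∑' i, Complex.log (g i) with hS_def
  have hS : HasSum (fun i => Complex.log (g i)) S := hsumlog.hasSum
  have hprod : HasProd g (Complex.exp S) := by
    have h2 := (Complex.continuous_exp.tendsto S).comp hS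
    refine h2.congr fun s => ?_
    simp only [Function.comp_apply]
    rw [Complex.exp_sum]
    exact Finset.prod_congr rfl fun i _ => Complex.exp_log (gnz i)
  have htp : (∏' i : ℕ, ((1:ℂ) - z / ((a (i+1) : ℝ) : ℂ))) = Complex.exp S := hprod.tprod_eq
  have habsfz : ‖f z‖ = C * t * Real.exp S.re := by
    rw [hf z, htp, norm_mul, norm_mul, Complex.norm_real, Real.norm_eq_abs, abs_of_pos hC0, Complex.norm_exp]
  -- real parts
  set u : ℕ → ℝ := fun i => (Complex.log (g i)).re with hu_def
  have hu : HasSum u S.re := Complex.hasSum_re hS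
  have husum : Summable u := hu.summable
  have hsplit : (∑ i ∈ range (k+1), u i) + ∑' m, u (m + (k+1)) = S.re := by
    rw [Summable.sum_add_tsum_nat_add (k+1) husum, hu.tsum_eq]
  set T : ℝ := ∑' m, u (m + (k+1)) with hT_def
  have huabs : ∀ m : ℕ, ‖u (m + (k+1))‖ ≤ (3/2) * ((1/800:ℝ)^m * (1/800)) := by
    intro m
    refine le_trans ?_ (hlogb m)
    rw [Real.norm_eq_abs]
    exact Complex.abs_re_le_norm _
  have husumnorm : Summable (fun m => ‖u (m + (k+1))‖) :=
    Summable.of_nonneg_of_le (fun m => norm_nonneg _) huabs hgeo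
  have hTb : |T| ≤ 3/1598 := by
    have h1 : ‖T‖ ≤ ∑' m, ‖u (m + (k+1))‖ := norm_tsum_le_tsum_norm husumnorm
    have h2 : ∑' m, ‖u (m + (k+1))‖ ≤ ∑' m, (3/2) * ((1/800:ℝ)^m * (1/800)) :=
      Summable.tsum_le_tsum huabs husumnorm hgeo
    have h3 : ∑' m : ℕ, (3/2) * ((1/800:ℝ)^m * (1/800)) = 3/1598 := by
      rw [tsum_mul_left, tsum_mul_right, tsum_geometric_of_lt_one (by norm_num) (by norm_num)]
      norm_num
    rw [Real.norm_eq_abs] at h1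
    linarith [h2.trans_eq h3]
  have hEub : Real.exp T ≤ 1598/1595 := by
    have h1 : T ≤ 3/1598 := le_trans (le_abs_self T) hTb
    calc Real.exp T ≤ Real.exp (3/1598) := Real.exp_le_exp.2 h1
      _ ≤ ((1:ℝ) - 3/1598)⁻¹ := aux_exp_le_inv (by norm_num) (by norm_num)
      _ ≤ 1598/1595 := by norm_num
  have hElb : (797:ℝ)/799 ≤ Real.exp T := by
    have h1 : -(3/1598:ℝ) ≤ T := by have := neg_abs_le T; linarith
    have h2 := Real.add_one_le_exp (-(3/1598:ℝ))
    calc (797:ℝ)/799 ≤ -(3/1598:ℝ) + 1 := by norm_num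
      _ ≤ Real.exp (-(3/1598:ℝ)) := h2
      _ ≤ Real.exp T := Real.exp_le_exp.2 h1
  have hexpu : ∀ i : ℕ, Real.exp (u i) = ‖g i‖ := by
    intro i
    show Real.exp ((Complex.log (g i)).re) = ‖g i‖
    rw [Complex.log_re, Real.exp_log (norm_pos_iff.mpr (gnz i))]
  set P1 : ℝ := ∏ i ∈ range k, ‖g i‖ with hP1_def
  set gk : ℝ := ‖g k‖ with hgk_def
  have hsplit2 : Real.exp S.re = P1 * gk * Real.exp T := by
    have e1 : ∏ i ∈ range (k+1), Real.exp (u i) = ∏ i ∈ range (k+1), ‖g i‖ :=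
      Finset.prod_congr rfl fun i _ => hexpu i
    rw [← hsplit, Real.exp_add, Real.exp_sum, e1, Finset.prod_range_succ]
  have habsfz2 : ‖f z‖ = C * t * (P1 * gk * Real.exp T) := by
    rw [habsfz, hsplit2]
  -- the finite part
  set Q : ℝ := ∏ j ∈ Icc 1 k, a j with hQ_def
  have hQpos : 0 < Q := Finset.prod_pos fun j hj => hpos j (Finset.mem_Icc.mp hj).1
  have hQrange : Q = ∏ i ∈ range k, a (i+1) := aux_Icc_prod a k
  have hj_le_t : ∀ i ∈ range k, a (i+1) ≤ t := by
    intro i hi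
    have h1 := Finset.mem_range.mp hi
    have h2 : a (i+1) ≤ a k := hmono (i+1) k (by omega) (by omega)
    linarith [hak]
  have hfac_lb : ∀ i ∈ range k, (t / a (i+1)) * (1 - a (i+1)/t) ≤ ‖g i‖ := by
    intro i _
    have h1 : 0 < a (i+1) := hpos _ (by omega)
    have heq : (t / a (i+1)) * (1 - a (i+1)/t) = t / a (i+1) - 1 := by field_simp
    rw [heq]; exact habs_lb1 i
  have hfac_nonneg : ∀ i ∈ range k, 0 ≤ (t / a (i+1)) * (1 - a (i+1)/t) := by
    intro i hi
    have h1 : 0 < a (i+1) := hpos _ (by omega)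
    have h3 : a (i+1)/t ≤ 1 := by rw [div_le_one ht0]; exact hj_le_t i hi
    have h4 : 0 ≤ t / a (i+1) := by positivity
    exact mul_nonneg h4 (by linarith)
  have hsplit3 : ∏ i ∈ range k, ((t / a (i+1)) * (1 - a (i+1)/t))
      = (t^k / Q) * ∏ i ∈ range k, (1 - a (i+1)/t) := by
    rw [Finset.prod_mul_distrib, Finset.prod_div_distrib, Finset.prod_const,
      Finset.card_range, hQrange]
  have hsum_div : ∑ i ∈ range k, a (i+1)/t ≤ 80/799 := by
    rw [← Finset.sum_div, ← aux_Icc_sum]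
    have h1 := hsumA k hk
    have h2 : (∑ j ∈ Icc 1 k, a j)/t ≤ ((800/799) * a k)/(10 * a k) := by
      apply div_le_div₀ (by positivity) h1 (by positivity) ht1.le
    have h3 : ((800/799) * a k)/(10 * a k) = 80/799 := by
      field_simp
      ring
    linarith
  have hprod_one_sub : (719:ℝ)/799 ≤ ∏ i ∈ range k, (1 - a (i+1)/t) := by
    have h1 := aux_prod_one_sub (range k) (fun i => a (i+1)/t)
      (fun i hi => by have := hpos (i+1) (by omega); positivity)
      (fun i hi => by rw [div_le_one ht0]; exact hj_le_t i hi)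
    have h2 : (1:ℝ) - ∑ i ∈ range k, a (i+1)/t ≥ 1 - 80/799 := by linarith [hsum_div]
    calc (719:ℝ)/799 = 1 - 80/799 := by norm_num
      _ ≤ 1 - ∑ i ∈ range k, a (i+1)/t := h2
      _ ≤ _ := h1
  have hP1_lb : (t^k / Q) * (719/799) ≤ P1 := by
    have hQt : (0:ℝ) < t^k / Q := by positivity
    calc (t^k/Q) * (719/799) ≤ (t^k/Q) * ∏ i ∈ range k, (1 - a (i+1)/t) :=
          mul_le_mul_of_nonneg_left hprod_one_sub hQt.le
      _ = ∏ i ∈ range k, ((t / a (i+1)) * (1 - a (i+1)/t)) := hsplit3.symm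
      _ ≤ P1 := Finset.prod_le_prod hfac_nonneg hfac_lb
  have hP1_ub : P1 ≤ (t^k / Q) * (799/719) := by
    have hfac_ub : ∀ i ∈ range k, ‖g i‖ ≤ (t/a (i+1)) * (1 + a (i+1)/t) := by
      intro i _
      have h1 : 0 < a (i+1) := hpos _ (by omega)
      have heq : (t/a (i+1)) * (1 + a (i+1)/t) = 1 + t/a (i+1) := by field_simp; ring
      rw [heq]; exact habs_ub i
    have h1 : P1 ≤ ∏ i ∈ range k, ((t/a (i+1)) * (1 + a (i+1)/t)) :=
      Finset.prod_le_prod (fun i _ => norm_nonneg _) hfac_ub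
    have h2 : ∏ i ∈ range k, ((t/a (i+1)) * (1 + a (i+1)/t))
        = (t^k/Q) * ∏ i ∈ range k, (1 + a (i+1)/t) := by
      rw [Finset.prod_mul_distrib, Finset.prod_div_distrib, Finset.prod_const,
        Finset.card_range, hQrange]
    have h3 : ∏ i ∈ range k, (1 + a (i+1)/t) ≤ Real.exp (∑ i ∈ range k, a (i+1)/t) :=
      aux_prod_le_exp _ _ (fun i hi => by have := hpos (i+1) (by omega); positivity)
    have h4 : Real.exp (∑ i ∈ range k, a (i+1)/t) ≤ Real.exp (80/799) :=
      Real.exp_le_exp.2 hsum_div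
    have h5 : Real.exp (80/799:ℝ) ≤ ((1:ℝ) - 80/799)⁻¹ := aux_exp_le_inv (by norm_num) (by norm_num)
    have h6 : ((1:ℝ) - 80/799)⁻¹ = 799/719 := by norm_num
    have hQt : (0:ℝ) ≤ t^k / Q := by positivity
    calc P1 ≤ (t^k/Q) * ∏ i ∈ range k, (1 + a (i+1)/t) := by rw [← h2]; exact h1
      _ ≤ (t^k/Q) * (799/719) :=
          mul_le_mul_of_nonneg_left (h3.trans (h4.trans (h5.trans_eq h6))) hQt
  -- the middle factor
  have hy : t / a (k+1) < (2*K+3)/(2*K+4) := (div_lt_iff₀ hak1).mpr ht2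
  have hgk_lb : 1 - t/a (k+1) ≤ gk := habs_lb2 k
  have hgk_pos : 0 < 1 - t/a (k+1) := by linarith [hfrac1, hy]
  have hgk_ub : gk ≤ 2 := by
    have h1 := habs_ub k
    have h2 : t/a (k+1) ≤ 1 := by rw [div_le_one hak1]; exact ht2'.le
    rw [hgk_def]; linarith
  -- algebraic identities
  have hakk1 : (0:ℝ) < (a k)^(k+1) := by positivity
  have hCQ : C * t^(k+1) / Q = a (k+1)/8 * (t/a k)^(k+1) := by
    have e := hQid k hk
    rw [← hQ_def] at e
    rw [div_pow]
    field_simp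
    linear_combination (-1) * e
  have e2 : a (k+2) * (Q * a (k+1)) = 8*C*(a (k+1))^(k+1+1) := by
    have e := hQid (k+1) (by omega)
    rw [Finset.prod_Icc_succ_top (by omega : 1 ≤ k+1), ← hQ_def] at e
    exact e
  have e3 : a (k+2) * Q = 8*C*(a (k+1))^(k+1) := by
    apply mul_right_cancel₀ (ne_of_gt hak1)
    calc (a (k+2) * Q) * a (k+1) = a (k+2) * (Q * a (k+1)) := by ring
      _ = 8*C*(a (k+1))^(k+1+1) := e2
      _ = (8*C*(a (k+1))^(k+1)) * a (k+1) := by ring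
  have hCQ2 : C * (a (k+1))^(k+1) / Q = a (k+2)/8 := by
    field_simp
    linear_combination (-1) * e3
  -- the key pointwise bound on (t / a k)^(k+1) (1 - t / a (k+1))
  have hx10 : (10:ℝ) ≤ t / a k := by rw [le_div_iff₀ hak]; linarith
  have hh : (90:ℝ) ≤ (t/a k)^(k+1) * (1 - t/a (k+1)) := by
    rcases le_or_gt t (20 * a k) with hA | hA
    · have h40 : t/a (k+1) ≤ 1/40 := by
        rw [div_le_iff₀ hak1]
        have := hgrow k hk
        linarith
      have hx2 : (100:ℝ) ≤ (t/a k)^(k+1) := by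
        calc (100:ℝ) = 10^2 := by norm_num
          _ ≤ 10^(k+1) := pow_le_pow_right₀ (by norm_num) (by omega)
          _ ≤ (t/a k)^(k+1) := pow_le_pow_left₀ (by norm_num) hx10 _
      calc (90:ℝ) ≤ 100 * (39/40) := by norm_num
        _ ≤ (t/a k)^(k+1) * (1 - t/a (k+1)) :=
            mul_le_mul hx2 (by linarith) (by norm_num) (by linarith)
    · rcases le_or_gt t ((2*K+2)/(2*K+4) * a (k+1)) with hB | hB
      · have hx20 : (20:ℝ) ≤ t/a k := by rw [le_div_iff₀ hak]; linarith
        have h1y : 2/(2*K+4) ≤ 1 - t/a (k+1) := by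
          have h2 : t/a (k+1) ≤ (2*K+2)/(2*K+4) := by rw [div_le_iff₀ hak1]; linarith
          have h3 : (2*K+2)/(2*K+4) + 2/(2*K+4) = 1 := by
            rw [← add_div, div_eq_one_iff_eq (by linarith : (2*K+4) ≠ 0)]
            ring
          linarith
        have h20 : (20:ℝ)^(k+1) ≤ (t/a k)^(k+1) := pow_le_pow_left₀ (by norm_num) hx20 _
        have haux := aux20 k hk
        have heq90 : (90:ℝ) = (90*K+180) * (2/(2*K+4)) := by
          rw [mul_div_assoc']
          rw [eq_div_iff (by linarith : (2*K+4) ≠ 0)]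
          ring
        calc (90:ℝ) = (90*K+180) * (2/(2*K+4)) := heq90
          _ ≤ (t/a k)^(k+1) * (1 - t/a (k+1)) := by
            apply mul_le_mul (le_trans haux h20) h1y (by positivity) (by positivity)
      · have hhalf : (1:ℝ)/2 ≤ (2*K+2)/(2*K+4) := by
          rw [div_le_div_iff₀ (by norm_num) (by linarith)]
          linarith
        have hxC : (400:ℝ) ≤ t/a k := by
          rw [le_div_iff₀ hak]
          have h2 : (1/2) * a (k+1) ≤ (2*K+2)/(2*K+4) * a (k+1) :=
            mul_le_mul_of_nonneg_right hhalf hak1.le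
          have := hgrow k hk
          linarith
        have h1y : 1/(2*K+4) ≤ 1 - t/a (k+1) := by
          have h3 : (2*K+3)/(2*K+4) + 1/(2*K+4) = 1 := by
            rw [← add_div, div_eq_one_iff_eq (by linarith : (2*K+4) ≠ 0)]
            ring
          linarith [hy]
        have h400 : (400:ℝ)^(k+1) ≤ (t/a k)^(k+1) := pow_le_pow_left₀ (by norm_num) hxC _
        have haux := aux400 k hk
        have heq90 : (90:ℝ) = (180*K+360) * (1/(2*K+4)) := by
          rw [mul_div_assoc']
          rw [eq_div_iff (by linarith : (2*K+4) ≠ 0)]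
          ring
        calc (90:ℝ) = (180*K+360) * (1/(2*K+4)) := heq90
          _ ≤ (t/a k)^(k+1) * (1 - t/a (k+1)) := by
            apply mul_le_mul (le_trans haux h400) h1y (by positivity) (by positivity)
  -- lower bound
  have hP1nn : (0:ℝ) ≤ P1 := Finset.prod_nonneg fun i _ => norm_nonneg _
  have hlow : 10 * a (k+1) < ‖f z‖ := by
    have step1 : C * t * ((t^k/Q * (719/799)) * ((1 - t/a (k+1)) * (797/799)))
        ≤ C * t * (P1 * (gk * Real.exp T)) := by
      apply mul_le_mul_of_nonneg_left ?_ (by positivity)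
      apply mul_le_mul hP1_lb ?_ ?_ hP1nn
      · apply mul_le_mul hgk_lb hElb (by norm_num) (le_trans hgk_pos.le hgk_lb)
      · exact mul_nonneg hgk_pos.le (by norm_num)
    have step0 : a (k+1)/8 * ((t/a k)^(k+1) * (1 - t/a (k+1))) * (719/799 * (797/799))
        = C * t * ((t^k/Q * (719/799)) * ((1 - t/a (k+1)) * (797/799))) := by
      calc a (k+1)/8 * ((t/a k)^(k+1) * (1 - t/a (k+1))) * (719/799 * (797/799))
          = (a (k+1)/8 * (t/a k)^(k+1)) * ((1 - t/a (k+1)) * (719/799 * (797/799))) := by ring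
        _ = (C * t^(k+1)/Q) * ((1 - t/a (k+1)) * (719/799 * (797/799))) := by rw [hCQ]
        _ = C * t * ((t^k/Q * (719/799)) * ((1 - t/a (k+1)) * (797/799))) := by
            rw [pow_succ]; ring
    have hfinal : a (k+1)/8 * 90 * (719/799 * (797/799)) ≤ ‖f z‖ := by
      rw [habsfz2]
      calc a (k+1)/8 * 90 * (719/799 * (797/799))
          ≤ a (k+1)/8 * ((t/a k)^(k+1) * (1 - t/a (k+1))) * (719/799 * (797/799)) :=
            mul_le_mul_of_nonneg_right
              (mul_le_mul_of_nonneg_left hh (by positivity)) (by norm_num)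
        _ = C * t * ((t^k/Q * (719/799)) * ((1 - t/a (k+1)) * (797/799))) := step0
        _ ≤ C * t * (P1 * (gk * Real.exp T)) := step1
        _ = C * t * (P1 * gk * Real.exp T) := by ring
    have hc10 : 10 * a (k+1) < a (k+1)/8 * 90 * (719/799 * (797/799)) := by
      have : a (k+1)/8 * 90 * (719/799 * (797/799)) = (51573870/5107208) * a (k+1) := by ring
      rw [this]
      have h10 : (10:ℝ) < 51573870/5107208 := by norm_num
      calc 10 * a (k+1) < (51573870/5107208) * a (k+1) := by
            exact mul_lt_mul_of_pos_right h10 hak1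
        _ = (51573870/5107208) * a (k+1) := rfl
    linarith
  -- upper bound
  have hup : ‖f z‖ < (2*K+5)/(2*K+6) * a (k+2) := by
    have step1 : C * t * (P1 * gk * Real.exp T)
        ≤ C * t * ((t^k/Q * (799/719)) * (2 * (1598/1595))) := by
      apply mul_le_mul_of_nonneg_left ?_ (by positivity)
      calc P1 * gk * Real.exp T ≤ (t^k/Q*(799/719)) * gk * Real.exp T := by
            apply mul_le_mul_of_nonneg_right
              (mul_le_mul_of_nonneg_right hP1_ub (norm_nonneg _)) (Real.exp_pos T).le
        _ ≤ (t^k/Q*(799/719)) * 2 * (1598/1595) := by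
            have hq1 : (0:ℝ) ≤ t^k/Q*(799/719) := by positivity
            apply mul_le_mul (mul_le_mul_of_nonneg_left hgk_ub hq1) hEub
              (Real.exp_pos T).le (by positivity)
        _ = (t^k/Q*(799/719)) * (2*(1598/1595)) := by ring
    have step2 : C * t * ((t^k/Q * (799/719)) * (2*(1598/1595)))
        = (C * t^(k+1)/Q) * (799/719 * (2*(1598/1595))) := by rw [pow_succ]; ring
    have step3 : C * t^(k+1)/Q ≤ C * (a (k+1))^(k+1)/Q := by
      have h1 : t^(k+1) ≤ (a (k+1))^(k+1) := pow_le_pow_left₀ ht0.le ht2'.le _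
      exact (div_le_div_iff_of_pos_right hQpos).mpr (mul_le_mul_of_nonneg_left h1 hC0.le)
    have step6 : (7:ℝ)/8 * a (k+2) ≤ (2*K+5)/(2*K+6) * a (k+2) := by
      have h1 : (7:ℝ)/8 ≤ (2*K+5)/(2*K+6) := by
        rw [div_le_div_iff₀ (by norm_num) (by linarith)]
        linarith
      exact mul_le_mul_of_nonneg_right h1 hak2.le
    calc ‖f z‖ = C * t * (P1*gk*Real.exp T) := habsfz2
      _ ≤ C * t * ((t^k/Q * (799/719)) * (2*(1598/1595))) := step1
      _ = (C*t^(k+1)/Q) * (799/719*(2*(1598/1595))) := step2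
      _ ≤ (C*(a (k+1))^(k+1)/Q) * (799/719*(2*(1598/1595))) :=
          mul_le_mul_of_nonneg_right step3 (by norm_num)
      _ = a (k+2)/8 * (799/719*(2*(1598/1595))) := by rw [hCQ2]
      _ < 7/8 * a (k+2) := by
          have : a (k+2)/8 * (799/719*(2*(1598/1595))) = (2553604/9174440) * a (k+2) := by ring
          rw [this]
          exact mul_lt_mul_of_pos_right (by norm_num : (2553604/9174440:ℝ) < 7/8) hak2
      _ ≤ (2*K+5)/(2*K+6) * a (k+2) := step6
  exact ⟨hlow, hup⟩


set_option maxHeartbeats 1000000 in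
/-- For the annuli B_k = {z : s_k < |z| < r_{k+1}} (with s_k = 10a_k,
r_{k+1} = ((2k+3)/(2k+4))a_{k+1}) and f as in the construction, for C sufficiently
large one has f(B_k) ⊆ B_{k+1} for all k ≥ 1; consequently every point of B_1 lies
in the escaping set of f. -/
theorem stmt9 : ∃ C0 : ℝ, ∀ C : ℝ, C0 ≤ C →
    ∀ a : ℕ → ℝ, (∀ k : ℕ, 1 ≤ k → 0 < a k) → a 1 = 1 →
    (∀ k : ℕ, 1 ≤ k → a (k+1) = 8 * C * a k * ∏ j ∈ Finset.Icc 1 (k-1), (a k / a j)) →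
    ∀ f : ℂ → ℂ, (∀ z, f z = C * z * ∏' i : ℕ, (1 - z / (a (i+1) : ℂ))) →
    (∀ k : ℕ, 1 ≤ k → Set.MapsTo f
        {z : ℂ | 10 * a k < ‖z‖ ∧
          ‖z‖ < (2 * (k : ℝ) + 3) / (2 * (k : ℝ) + 4) * a (k+1)}
        {z : ℂ | 10 * a (k+1) < ‖z‖ ∧
          ‖z‖ < (2 * (k : ℝ) + 5) / (2 * (k : ℝ) + 6) * a (k+2)}) ∧
    (∀ z : ℂ, 10 * a 1 < ‖z‖ →
      ‖z‖ < (2 * (1 : ℝ) + 3) / (2 * (1 : ℝ) + 4) * a 2 →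
      Filter.Tendsto (fun n : ℕ => ‖f^[n] z‖) Filter.atTop Filter.atTop) := by
  refine ⟨100, ?_⟩
  intro C hC a hpos ha1 harec f hf
  have hchain : ∀ n : ℕ, 1 ≤ n → ∀ j : ℕ, 1 ≤ j → j ≤ n → a j ≤ a n := by
    intro n
    induction n with
    | zero => omega
    | succ n ih =>
      intro _ j hj hjn
      rcases Nat.lt_or_ge j (n+1) with h | h
      · have hn1 : 1 ≤ n := by omega
        have h1 : a j ≤ a n := ih hn1 j hj (by omega)
        have h2 : a n ≤ a (n+1) := by
          have e := harec n hn1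
          have hprod1 : (1:ℝ) ≤ ∏ jj ∈ Finset.Icc 1 (n-1), (a n / a jj) := by
            calc (1:ℝ) = ∏ _jj ∈ Finset.Icc 1 (n-1), 1 := by simp
              _ ≤ ∏ jj ∈ Finset.Icc 1 (n-1), (a n / a jj) := by
                apply Finset.prod_le_prod (by intros; norm_num)
                intro jj hjj
                have hjj' := Finset.mem_Icc.mp hjj
                have h3 : 0 < a jj := hpos jj hjj'.1
                rw [le_div_iff₀ h3]
                have := ih hn1 jj hjj'.1 (by omega)
                linarith
          have h4 : 0 < a n := hpos n hn1
          have h5 : 8*C*a n ≤ 8*C*a n * ∏ jj ∈ Finset.Icc 1 (n-1), (a n / a jj) :=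
            le_mul_of_one_le_right (by positivity) hprod1
          have h6 : a n * 1 ≤ a n * (8*C) := mul_le_mul_of_nonneg_left (by linarith) h4.le
          nlinarith [e, h5, h6]
        linarith
      · have hj1 : j = n+1 := by omega
        rw [hj1]
  have hmono : ∀ m n : ℕ, 1 ≤ m → m ≤ n → a m ≤ a n := fun m n hm hmn =>
    hchain n (by omega) m hm hmn
  have hgrow : ∀ k : ℕ, 1 ≤ k → 800 * a k ≤ a (k+1) := by
    intro k hk
    have e := harec k hk
    have hprod1 : (1:ℝ) ≤ ∏ jj ∈ Finset.Icc 1 (k-1), (a k / a jj) := by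
      calc (1:ℝ) = ∏ _jj ∈ Finset.Icc 1 (k-1), 1 := by simp
        _ ≤ ∏ jj ∈ Finset.Icc 1 (k-1), (a k / a jj) := by
          apply Finset.prod_le_prod (by intros; norm_num)
          intro jj hjj
          have hjj' := Finset.mem_Icc.mp hjj
          have h3 : 0 < a jj := hpos jj hjj'.1
          rw [le_div_iff₀ h3]
          have := hmono jj k hjj'.1 (by omega)
          linarith
    have h4 : 0 < a k := hpos k hk
    have h5 : 8*C*a k ≤ 8*C*a k * ∏ jj ∈ Finset.Icc 1 (k-1), (a k / a jj) :=
      le_mul_of_one_le_right (by positivity) hprod1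
    have h6 : a k * 800 ≤ a k * (8*C) := mul_le_mul_of_nonneg_left (by linarith) h4.le
    nlinarith [e, h5, h6]
  have hsumA : ∀ k : ℕ, 1 ≤ k → ∑ j ∈ Finset.Icc 1 k, a j ≤ (800/799) * a k := by
    intro k hk
    induction k, hk using Nat.le_induction with
    | base =>
      rw [Finset.Icc_self, Finset.sum_singleton]
      have := hpos 1 le_rfl
      linarith
    | succ n hn ih =>
      rw [Finset.sum_Icc_succ_top (by omega)]
      have h1 := hgrow n hn
      have h2 := hpos n hn
      linarith
  have hQid : ∀ k : ℕ, 1 ≤ k → a (k+1) * ∏ j ∈ Finset.Icc 1 k, a j = 8*C*(a k)^(k+1) := by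
    intro k hk
    obtain ⟨m, rfl⟩ : ∃ m, k = m + 1 := ⟨k-1, by omega⟩
    have e := harec (m+1) (by omega)
    simp only [Nat.add_sub_cancel] at e
    have hP0 : 0 < ∏ j ∈ Finset.Icc 1 m, a j :=
      Finset.prod_pos fun j hj => hpos j (Finset.mem_Icc.mp hj).1
    have hprodd : ∏ j ∈ Finset.Icc 1 m, (a (m+1) / a j)
        = (a (m+1))^m / ∏ j ∈ Finset.Icc 1 m, a j := by
      rw [Finset.prod_div_distrib, Finset.prod_const, Nat.card_Icc]
      simp
    rw [Finset.prod_Icc_succ_top (by omega : 1 ≤ m+1), e, hprodd]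
    have ham1 : 0 < a (m+1) := hpos (m+1) (by omega)
    field_simp
    ring
  have hkey : ∀ (k : ℕ), 1 ≤ k → ∀ (z : ℂ), 10 * a k < ‖z‖ →
      ‖z‖ < (2*(k:ℝ)+3)/(2*(k:ℝ)+4) * a (k+1) →
      10 * a (k+1) < ‖f z‖ ∧
        ‖f z‖ < (2*(k:ℝ)+5)/(2*(k:ℝ)+6) * a (k+2) :=
    fun k hk z ht1 ht2 => key_est C hC a hpos hmono hgrow hsumA hQid f hf k hk z ht1 ht2
  constructor
  · intro k hk z hz
    exact hkey k hk z hz.1 hz.2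
  · intro z h1 h2
    have horb : ∀ n : ℕ, 10 * a (n+1) < ‖f^[n] z‖ ∧
        ‖f^[n] z‖ < (2*((n+1:ℕ):ℝ)+3)/(2*((n+1:ℕ):ℝ)+4) * a (n+2) := by
      intro n
      induction n with
      | zero =>
        refine ⟨by simpa using h1, ?_⟩
        have heq : ((2:ℝ) * ((0+1:ℕ):ℝ)+3)/(2*((0+1:ℕ):ℝ)+4) = (2*(1:ℝ)+3)/(2*(1:ℝ)+4) := by
          norm_num
        simpa [heq] using h2
      | succ n ih =>
        rw [Function.iterate_succ_apply']
        have h := hkey (n+1) (by omega) (f^[n] z) ih.1 ih.2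
        refine ⟨h.1, ?_⟩
        have heq : ((2:ℝ)*((n+1+1:ℕ):ℝ)+3)/(2*((n+1+1:ℕ):ℝ)+4)
            = (2*((n+1:ℕ):ℝ)+5)/(2*((n+1:ℕ):ℝ)+6) := by
          push_cast
          rw [show (2:ℝ)*((n:ℝ)+1+1)+3 = 2*((n:ℝ)+1)+5 from by ring,
            show (2:ℝ)*((n:ℝ)+1+1)+4 = 2*((n:ℝ)+1)+6 from by ring]
        rw [heq]
        exact h.2
    have hA : ∀ n : ℕ, (800:ℝ)^n ≤ a (n+1) := by
      intro n
      induction n with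
      | zero => simp [ha1]
      | succ n ih =>
        have hg := hgrow (n+1) (by omega)
        have h2 : (800:ℝ)^(n+1) = 800 * 800^n := by ring
        rw [h2]
        linarith [mul_le_mul_of_nonneg_left ih (by norm_num : (0:ℝ) ≤ 800), hg]
    refine tendsto_atTop_mono (f := fun n : ℕ => 10 * (800:ℝ)^n) (fun n => ?_) ?_
    · show 10 * (800:ℝ)^n ≤ ‖f^[n] z‖
      have hb1 := (horb n).1
      have hb2 := hA n
      linarith
    · exact (tendsto_pow_atTop_atTop_of_one_lt (by norm_num : (1:ℝ) < 800)).const_mul_atTop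
        (by norm_num : (0:ℝ) < 10)
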